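/- Let G be continuously differentiable on an open interval I containing [ν, μ] and the point (ν+μ)/(2m), where m ∈ (0,1], and let W : [ν, μ] → ℝ be nonnegative, continuous, and symmetric about (ν+μ)/2. Suppose |G'| is (h,m)-convex with h nonnegative and integrable on [0,1]. Then |((G(ν)+G(μ))/2) ∫_ν^μ W(x) dx − ∫_ν^μ W(x)G(x) dx| ≤ ((μ-ν)²/4) · ‖W‖_∞ · ∫_0^1 γ·[h(γ)(|G'(ν)| + |G'(μ)|) + 2m·h(1-γ)·|G'((ν+μ)/(2m))|] dγ, where ‖W‖_∞ = sup_{t ∈ [ν,μ]} W(t). -/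

import Mathlib

open Set MeasureTheory intervalIntegral

set_option maxHeartbeats 1000000 in
theorem fejer_bound_hm
    (ν μ m a b : ℝ) (hνμ : ν < μ) (hm : m ∈ Set.Ioc (0:ℝ) 1)
    (hab : Set.Icc ν μ ⊆ Set.Ioo a b) (hmid : (ν + μ) / (2 * m) ∈ Set.Ioo a b)
    (h : ℝ → ℝ) (hh : ∀ γ ∈ Set.Icc (0:ℝ) 1, 0 ≤ h γ)
    (hhint : IntervalIntegrable h MeasureTheory.volume 0 1)
    (G W : ℝ → ℝ)
    (hG : ContDiffOn ℝ 1 G (Set.Ioo a b))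
    (hG' : ∀ x ∈ Set.Ioo a b, ∀ y ∈ Set.Ioo a b, ∀ γ ∈ Set.Icc (0:ℝ) 1,
      |deriv G (γ * x + m * (1 - γ) * y)| ≤ h γ * |deriv G x| + m * h (1 - γ) * |deriv G y|)
    (hWnonneg : ∀ x ∈ Set.Icc ν μ, 0 ≤ W x)
    (hWcont : ContinuousOn W (Set.Icc ν μ))
    (hWsym : ∀ x ∈ Set.Icc ν μ, W (ν + μ - x) = W x) :
    |(G ν + G μ) / 2 * (∫ x in ν..μ, W x) - ∫ x in ν..μ, W x * G x|
      ≤ (μ - ν) ^ 2 / 4 * sSup (W '' Set.Icc ν μ) *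
        ∫ γ in (0:ℝ)..1,
          γ * (h γ * (|deriv G ν| + |deriv G μ|)
            + 2 * m * h (1 - γ) * |deriv G ((ν + μ) / (2 * m))|) := by
  obtain ⟨hm0, hm1⟩ := hm
  have hle : ν ≤ μ := hνμ.le
  set c : ℝ := (ν + μ) / (2 * m) with hcdef
  set mid : ℝ := (ν + μ) / 2 with hmiddef
  have hνmem : ν ∈ Set.Icc ν μ := ⟨le_rfl, hle⟩
  have hμmem : μ ∈ Set.Icc ν μ := ⟨hle, le_rfl⟩
  have huIcc : Set.uIcc ν μ = Set.Icc ν μ := Set.uIcc_of_le hle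
  -- extension of W
  set Wt : ℝ → ℝ := fun t => W ((Set.projIcc ν μ hle t : ℝ)) with hWtdef
  have hWtcont : Continuous Wt := by
    have hproj : Continuous fun t : ℝ => ((Set.projIcc ν μ hle t : ℝ)) :=
      continuous_subtype_val.comp continuous_projIcc
    exact hWcont.comp_continuous hproj fun x => (Set.projIcc ν μ hle x).2
  have hWteq : ∀ x ∈ Set.Icc ν μ, Wt x = W x := by
    intro x hx
    simp [hWtdef, Set.projIcc_of_mem hle hx]
  have hWint : ∀ u v : ℝ, IntervalIntegrable Wt volume u v := fun u v =>
    hWtcont.intervalIntegrable u v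
  set P : ℝ → ℝ := fun x => ∫ t in ν..x, Wt t with hPdef
  have hPderiv : ∀ x : ℝ, HasDerivAt P (Wt x) x := fun x =>
    intervalIntegral.integral_hasDerivAt_right (hWint ν x)
      hWtcont.stronglyMeasurable.stronglyMeasurableAtFilter hWtcont.continuousAt
  have hPcont : Continuous P := by
    have : Differentiable ℝ P := fun x => (hPderiv x).differentiableAt
    exact this.continuous
  -- symmetry of P
  have hPsym : ∀ x ∈ Set.Icc ν μ, P (ν + μ - x) = P μ - P x := by
    intro x hx
    have hx' : ν + μ - x ∈ Set.Icc ν μ := ⟨by linarith [hx.2], by linarith [hx.1]⟩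
    have h1 : P x + ∫ t in x..μ, Wt t = P μ :=
      integral_add_adjacent_intervals (hWint ν x) (hWint x μ)
    have e1 : P (ν + μ - x) = ∫ t in ν..(ν + μ - x), Wt ((ν + μ) - t) := by
      apply intervalIntegral.integral_congr
      intro t ht
      rw [Set.uIcc_of_le hx'.1] at ht
      have htm : t ∈ Set.Icc ν μ := ⟨ht.1, le_trans ht.2 hx'.2⟩
      have htm' : ν + μ - t ∈ Set.Icc ν μ := ⟨by linarith [htm.2], by linarith [htm.1]⟩
      show Wt t = Wt (ν + μ - t)
      rw [hWteq t htm, hWteq _ htm', hWsym t htm]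
    have e2 : (∫ t in ν..(ν + μ - x), Wt ((ν + μ) - t))
        = ∫ t in (ν + μ - (ν + μ - x))..(ν + μ - ν), Wt t :=
      intervalIntegral.integral_comp_sub_left Wt (ν + μ)
    have e3 : ν + μ - (ν + μ - x) = x := by ring
    have e4 : ν + μ - ν = μ := by ring
    rw [e1, e2, e3, e4]
    linarith [h1]
  -- sup of W
  set M : ℝ := sSup (W '' Set.Icc ν μ) with hMdef
  have hMbdd : BddAbove (W '' Set.Icc ν μ) :=
    (isCompact_Icc.image_of_continuousOn hWcont).bddAbove
  have hWleM : ∀ t ∈ Set.Icc ν μ, W t ≤ M := fun t ht =>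
    le_csSup hMbdd ⟨t, ht, rfl⟩
  have hM0 : 0 ≤ M := le_trans (hWnonneg ν hνmem) (hWleM ν hνmem)
  -- bound on |P x - P μ / 2|
  have hPbound : ∀ x ∈ Set.Icc ν μ, |P x - P μ / 2| ≤ M / 2 * |2 * x - (ν + μ)| := by
    intro x hx
    have hx' : ν + μ - x ∈ Set.Icc ν μ := ⟨by linarith [hx.2], by linarith [hx.1]⟩
    have hadd : P (ν + μ - x) + ∫ t in (ν + μ - x)..x, Wt t = P x :=
      integral_add_adjacent_intervals (hWint ν (ν + μ - x)) (hWint (ν + μ - x) x)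
    have hnorm : |∫ t in (ν + μ - x)..x, Wt t| ≤ M * |x - (ν + μ - x)| := by
      rw [← Real.norm_eq_abs]
      apply intervalIntegral.norm_integral_le_of_norm_le_const
      intro t ht
      have htm : t ∈ Set.Icc ν μ := by
        rcases Set.mem_uIoc.mp ht with h' | h'
        · constructor
          · linarith [h'.1, hx'.1]
          · linarith [h'.2, hx.2]
        · constructor
          · linarith [h'.1, hx.1]
          · linarith [h'.2, hx'.2]
      rw [Real.norm_eq_abs, hWteq t htm, abs_of_nonneg (hWnonneg t htm)]
      exact hWleM t htm
    have hps := hPsym x hx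
    have hval : P x - P μ / 2 = (∫ t in (ν + μ - x)..x, Wt t) / 2 := by linarith
    rw [hval, abs_div]
    have h2 : x - (ν + μ - x) = 2 * x - (ν + μ) := by ring
    rw [h2] at hnorm
    simp only [abs_two]
    linarith [hnorm]
  -- derivative facts for G
  have hGdiff : ∀ x ∈ Set.Ioo a b, DifferentiableAt ℝ G x := fun x hx =>
    (hG.differentiableOn one_ne_zero).differentiableAt (isOpen_Ioo.mem_nhds hx)
  have hG'cont : ContinuousOn (deriv G) (Set.Ioo a b) :=
    hG.continuousOn_deriv_of_isOpen isOpen_Ioo le_rfl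
  have hG'contIcc : ContinuousOn (deriv G) (Set.Icc ν μ) := hG'cont.mono hab
  have hG'int : IntervalIntegrable (deriv G) volume ν μ := by
    apply ContinuousOn.intervalIntegrable
    rwa [huIcc]
  -- integration by parts
  have parts : ∫ x in ν..μ, G x * Wt x
      = G μ * P μ - G ν * P ν - ∫ x in ν..μ, deriv G x * P x := by
    apply intervalIntegral.integral_mul_deriv_eq_deriv_mul
    · intro x hx
      exact (hGdiff x (hab (huIcc ▸ hx))).hasDerivAt
    · intro x _
      exact hPderiv x
    · exact hG'int
    · exact hWint ν μ
  have hPν : P ν = 0 := intervalIntegral.integral_same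
  have hWG : (∫ x in ν..μ, W x * G x) = ∫ x in ν..μ, G x * Wt x := by
    apply intervalIntegral.integral_congr
    intro t ht
    rw [huIcc] at ht
    show W t * G t = G t * Wt t
    rw [hWteq t ht, mul_comm]
  have hWW : (∫ x in ν..μ, W x) = P μ := by
    apply intervalIntegral.integral_congr
    intro t ht
    rw [huIcc] at ht
    show W t = Wt t
    exact (hWteq t ht).symm
  have ftc2 : (∫ x in ν..μ, deriv G x) = G μ - G ν := by
    apply intervalIntegral.integral_deriv_eq_sub
    · intro x hx
      exact hGdiff x (hab (huIcc ▸ hx))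
    · exact hG'int
  have hG'Pint : IntervalIntegrable (fun x => deriv G x * P x) volume ν μ :=
    hG'int.mul_continuousOn hPcont.continuousOn
  have hG'cint : IntervalIntegrable (fun x => deriv G x * (P x - P μ / 2)) volume ν μ :=
    hG'int.mul_continuousOn (by fun_prop)
  -- key identity
  have key : (G ν + G μ) / 2 * (∫ x in ν..μ, W x) - (∫ x in ν..μ, W x * G x)
      = ∫ x in ν..μ, deriv G x * (P x - P μ / 2) := by
    have e : (∫ x in ν..μ, deriv G x * (P x - P μ / 2))
        = (∫ x in ν..μ, deriv G x * P x) - (∫ x in ν..μ, (P μ / 2) * deriv G x) := by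
      rw [← intervalIntegral.integral_sub hG'Pint (hG'int.const_mul _)]
      apply intervalIntegral.integral_congr
      intro t _
      ring
    rw [hWG, hWW, parts, hPν, e, intervalIntegral.integral_const_mul, ftc2]
    ring
  -- the comparison function
  set F : ℝ → ℝ := fun x => |2 * x - (ν + μ)| * |deriv G x| with hFdef
  have hFcont : ContinuousOn F (Set.Icc ν μ) := by
    apply ContinuousOn.mul
    · fun_prop
    · exact hG'contIcc.abs
  have hFint : IntervalIntegrable F volume ν μ := by
    apply ContinuousOn.intervalIntegrable
    rwa [huIcc]
  -- first bound
  have bound1 : |(G ν + G μ) / 2 * (∫ x in ν..μ, W x) - (∫ x in ν..μ, W x * G x)|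
      ≤ M / 2 * ∫ x in ν..μ, F x := by
    rw [key]
    calc |∫ x in ν..μ, deriv G x * (P x - P μ / 2)|
        ≤ ∫ x in ν..μ, |deriv G x * (P x - P μ / 2)| :=
          intervalIntegral.abs_integral_le_integral_abs hle
      _ ≤ ∫ x in ν..μ, M / 2 * F x := by
          apply intervalIntegral.integral_mono_on hle hG'cint.abs
            ((hFint.const_mul _))
          intro x hx
          rw [abs_mul, hFdef]
          have := hPbound x hx
          calc |deriv G x| * |P x - P μ / 2|
              ≤ |deriv G x| * (M / 2 * |2 * x - (ν + μ)|) :=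
                mul_le_mul_of_nonneg_left this (abs_nonneg _)
            _ = M / 2 * (|2 * x - (ν + μ)| * |deriv G x|) := by ring
      _ = M / 2 * ∫ x in ν..μ, F x := intervalIntegral.integral_const_mul _ _
  -- split the integral
  have hmid1 : ν ≤ mid := by rw [hmiddef]; linarith
  have hmid2 : mid ≤ μ := by rw [hmiddef]; linarith
  have hF1 : IntervalIntegrable F volume ν mid := by
    apply ContinuousOn.intervalIntegrable
    apply hFcont.mono
    rw [Set.uIcc_of_le hmid1]
    exact Set.Icc_subset_Icc le_rfl hmid2
  have hF2 : IntervalIntegrable F volume mid μ := by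
    apply ContinuousOn.intervalIntegrable
    apply hFcont.mono
    rw [Set.uIcc_of_le hmid2]
    exact Set.Icc_subset_Icc hmid1 le_rfl
  have hsplit : (∫ x in ν..μ, F x) = (∫ x in ν..mid, F x) + ∫ x in mid..μ, F x :=
    (integral_add_adjacent_intervals hF1 hF2).symm
  -- substitutions
  have hc1ne : (ν - mid) ≠ 0 := by rw [hmiddef]; intro hcon; apply absurd hνμ; linarith [hcon]; 
  have hc2ne : (μ - mid) ≠ 0 := by rw [hmiddef]; intro hcon; apply absurd hνμ; linarith [hcon]
  have hνIoo : ν ∈ Set.Ioo a b := hab hνmem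
  have hμIoo : μ ∈ Set.Ioo a b := hab hμmem
  -- integrability of γ ↦ h (1 - γ)
  have hh1int : IntervalIntegrable (fun γ => h (1 - γ)) volume 0 1 := by
    have := (hhint.comp_sub_left 1).symm
    simpa using this
  have hRint : ∀ A B : ℝ, IntervalIntegrable
      (fun γ => (μ - ν) * γ * (h γ * A + m * h (1 - γ) * B)) volume 0 1 := by
    intro A B
    have h1 : IntervalIntegrable (fun γ => h γ * ((μ - ν) * γ * A)) volume 0 1 :=
      hhint.mul_continuousOn (by fun_prop)
    have h2 : IntervalIntegrable (fun γ => h (1 - γ) * ((μ - ν) * γ * (m * B))) volume 0 1 :=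
      hh1int.mul_continuousOn (by fun_prop)
    have heq : (fun γ => (μ - ν) * γ * (h γ * A + m * h (1 - γ) * B))
        = fun γ => h γ * ((μ - ν) * γ * A) + h (1 - γ) * ((μ - ν) * γ * (m * B)) := by
      funext γ; ring
    rw [heq]; exact h1.add h2
  -- generic substitution lemma
  have hsubst : ∀ cc : ℝ, cc ≠ 0 →
      (∫ x in mid..(cc + mid), F x) = cc * ∫ γ in (0:ℝ)..1, F (cc * γ + mid) := by
    intro cc hcc
    rw [intervalIntegral.integral_comp_mul_add F hcc mid,
      show cc * 0 + mid = mid by ring, show cc * 1 + mid = cc + mid by ring,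
      smul_eq_mul, ← mul_assoc, mul_inv_cancel₀ hcc, one_mul]
  have hI1 : (∫ x in ν..mid, F x)
      = (mid - ν) * ∫ γ in (0:ℝ)..1, F ((ν - mid) * γ + mid) := by
    have h1 := hsubst (ν - mid) hc1ne
    rw [show ν - mid + mid = ν by ring] at h1
    have h2 : (∫ x in mid..ν, F x) = -∫ x in ν..mid, F x :=
      intervalIntegral.integral_symm ν mid
    rw [h2] at h1
    have h3 : (mid - ν) * (∫ γ in (0:ℝ)..1, F ((ν - mid) * γ + mid))
        = -((ν - mid) * ∫ γ in (0:ℝ)..1, F ((ν - mid) * γ + mid)) := by ring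
    rw [h3, ← h1, neg_neg]
  have hI2 : (∫ x in mid..μ, F x)
      = (μ - mid) * ∫ γ in (0:ℝ)..1, F ((μ - mid) * γ + mid) := by
    have h1 := hsubst (μ - mid) hc2ne
    rwa [show μ - mid + mid = μ by ring] at h1
  -- continuity of composed functions
  have hmaps1 : ∀ γ ∈ Set.Icc (0:ℝ) 1, (ν - mid) * γ + mid ∈ Set.Icc ν μ := by
    intro γ hγ
    have q1 : 0 ≤ (1 - γ) * (mid - ν) := mul_nonneg (by linarith [hγ.2]) (by linarith [hmid1])
    have q2 : 0 ≤ γ * (mid - ν) := mul_nonneg hγ.1 (by linarith [hmid1])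
    constructor <;> linarith [q1, q2, hmid2]
  have hmaps2 : ∀ γ ∈ Set.Icc (0:ℝ) 1, (μ - mid) * γ + mid ∈ Set.Icc ν μ := by
    intro γ hγ
    have q3 : 0 ≤ (1 - γ) * (μ - mid) := mul_nonneg (by linarith [hγ.2]) (by linarith [hmid2])
    have q4 : 0 ≤ γ * (μ - mid) := mul_nonneg hγ.1 (by linarith [hmid2])
    constructor <;> linarith [q3, q4, hmid1]
  have hcompint1 : IntervalIntegrable (fun γ => F ((ν - mid) * γ + mid)) volume 0 1 := by
    apply ContinuousOn.intervalIntegrable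
    rw [Set.uIcc_of_le zero_le_one]
    exact hFcont.comp (by fun_prop) hmaps1
  have hcompint2 : IntervalIntegrable (fun γ => F ((μ - mid) * γ + mid)) volume 0 1 := by
    apply ContinuousOn.intervalIntegrable
    rw [Set.uIcc_of_le zero_le_one]
    exact hFcont.comp (by fun_prop) hmaps2
  -- pointwise bounds via (h,m)-convexity
  have hpoint1 : ∀ γ ∈ Set.Icc (0:ℝ) 1,
      F ((ν - mid) * γ + mid)
        ≤ (μ - ν) * γ * (h γ * |deriv G ν| + m * h (1 - γ) * |deriv G c|) := by
    intro γ hγ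
    have hpt : (ν - mid) * γ + mid = γ * ν + m * (1 - γ) * c := by
      rw [hcdef, hmiddef]; field_simp; ring
    have hb := hG' ν hνIoo c hmid γ hγ
    have habs : |2 * ((ν - mid) * γ + mid) - (ν + μ)| = (μ - ν) * γ := by
      rw [hmiddef, show 2 * ((ν - (ν + μ) / 2) * γ + (ν + μ) / 2) - (ν + μ)
        = -((μ - ν) * γ) by ring, abs_neg]
      exact abs_of_nonneg (by nlinarith [hγ.1])
    show |2 * ((ν - mid) * γ + mid) - (ν + μ)| * |deriv G ((ν - mid) * γ + mid)| ≤ _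
    rw [habs, hpt]
    exact mul_le_mul_of_nonneg_left hb (by nlinarith [hγ.1])
  have hpoint2 : ∀ γ ∈ Set.Icc (0:ℝ) 1,
      F ((μ - mid) * γ + mid)
        ≤ (μ - ν) * γ * (h γ * |deriv G μ| + m * h (1 - γ) * |deriv G c|) := by
    intro γ hγ
    have hpt : (μ - mid) * γ + mid = γ * μ + m * (1 - γ) * c := by
      rw [hcdef, hmiddef]; field_simp; ring
    have hb := hG' μ hμIoo c hmid γ hγ
    have habs : |2 * ((μ - mid) * γ + mid) - (ν + μ)| = (μ - ν) * γ := by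
      rw [hmiddef, show 2 * ((μ - (ν + μ) / 2) * γ + (ν + μ) / 2) - (ν + μ)
        = (μ - ν) * γ by ring]
      exact abs_of_nonneg (by nlinarith [hγ.1])
    show |2 * ((μ - mid) * γ + mid) - (ν + μ)| * |deriv G ((μ - mid) * γ + mid)| ≤ _
    rw [habs, hpt]
    exact mul_le_mul_of_nonneg_left hb (by nlinarith [hγ.1])
  have hmono1 : (∫ γ in (0:ℝ)..1, F ((ν - mid) * γ + mid))
      ≤ ∫ γ in (0:ℝ)..1, (μ - ν) * γ * (h γ * |deriv G ν| + m * h (1 - γ) * |deriv G c|) :=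
    intervalIntegral.integral_mono_on zero_le_one hcompint1 (hRint _ _) hpoint1
  have hmono2 : (∫ γ in (0:ℝ)..1, F ((μ - mid) * γ + mid))
      ≤ ∫ γ in (0:ℝ)..1, (μ - ν) * γ * (h γ * |deriv G μ| + m * h (1 - γ) * |deriv G c|) :=
    intervalIntegral.integral_mono_on zero_le_one hcompint2 (hRint _ _) hpoint2
  -- sum of the two right-hand integrals
  have hsum : (∫ γ in (0:ℝ)..1, (μ - ν) * γ * (h γ * |deriv G ν| + m * h (1 - γ) * |deriv G c|))
      + (∫ γ in (0:ℝ)..1, (μ - ν) * γ * (h γ * |deriv G μ| + m * h (1 - γ) * |deriv G c|))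
      = (μ - ν) * ∫ γ in (0:ℝ)..1,
          γ * (h γ * (|deriv G ν| + |deriv G μ|) + 2 * m * h (1 - γ) * |deriv G c|) := by
    rw [← intervalIntegral.integral_add (hRint _ _) (hRint _ _),
      ← intervalIntegral.integral_const_mul]
    apply intervalIntegral.integral_congr
    intro γ _
    ring
  -- final assembly
  have hT1nonneg : (0:ℝ) ≤ mid - ν := by linarith [hmid1]
  have hT2nonneg : (0:ℝ) ≤ μ - mid := by linarith [hmid2]
  calc |(G ν + G μ) / 2 * (∫ x in ν..μ, W x) - ∫ x in ν..μ, W x * G x|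
      ≤ M / 2 * ∫ x in ν..μ, F x := bound1
    _ = M / 2 * ((mid - ν) * (∫ γ in (0:ℝ)..1, F ((ν - mid) * γ + mid))
        + (μ - mid) * ∫ γ in (0:ℝ)..1, F ((μ - mid) * γ + mid)) := by
        rw [hsplit, hI1, hI2]
    _ ≤ M / 2 * ((mid - ν) * (∫ γ in (0:ℝ)..1,
            (μ - ν) * γ * (h γ * |deriv G ν| + m * h (1 - γ) * |deriv G c|))
        + (μ - mid) * ∫ γ in (0:ℝ)..1,
            (μ - ν) * γ * (h γ * |deriv G μ| + m * h (1 - γ) * |deriv G c|)) := by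
        apply mul_le_mul_of_nonneg_left _ (by linarith : (0:ℝ) ≤ M / 2)
        have e1 := mul_le_mul_of_nonneg_left hmono1 hT1nonneg
        have e2 := mul_le_mul_of_nonneg_left hmono2 hT2nonneg
        linarith
    _ = (μ - ν) ^ 2 / 4 * M * ∫ γ in (0:ℝ)..1,
          γ * (h γ * (|deriv G ν| + |deriv G μ|) + 2 * m * h (1 - γ) * |deriv G c|) := by
        rw [hmiddef]
        linear_combination (M * (μ - ν) / 4) * hsum
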